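/- Over a Noetherian commutative ring, every finitely embedded module is Artinian. -/

import Mathlib

universe u

/-- A linear map is a pure monomorphism if it is injective and remains injective after
tensoring with every `R`-module. -/
def IsPureMono (R : Type u) [CommRing R] {M N : Type u} [AddCommGroup M] [Module R M]
    [AddCommGroup N] [Module R N] (f : M →ₗ[R] N) : Prop :=
  Function.Injective f ∧
    ∀ (L : Type u) [AddCommGroup L] [Module R L], Function.Injective (LinearMap.rTensor L f)

/-- A module `D` is pure injective if every homomorphism into `D` extends along every
pure monomorphism. -/
def IsPureInjective (R : Type u) [CommRing R] (D : Type u) [AddCommGroup D] [Module R D] :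
    Prop :=
  ∀ (M N : Type u) [AddCommGroup M] [Module R M] [AddCommGroup N] [Module R N]
    (f : M →ₗ[R] N), IsPureMono R f → ∀ g : M →ₗ[R] D, ∃ h : N →ₗ[R] D, h ∘ₗ f = g

/-- A module is finitely embedded if it embeds into the injective envelope of a direct sum
of finitely many simple modules, i.e. into an injective module which is an essential
extension of a finitely generated semisimple submodule. -/
def FinitelyEmbedded (R : Type u) [CommRing R] (M : Type u) [AddCommGroup M] [Module R M] :
    Prop :=
  ∃ E : ModuleCat.{u} R, Module.Injective R E ∧
    ∃ S : Submodule R E, IsSemisimpleModule R S ∧ S.FG ∧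
      (∀ P : Submodule R E, P ≠ ⊥ → S ⊓ P ≠ ⊥) ∧
      ∃ f : M →ₗ[R] E, Function.Injective f

section Auxiliary

open Submodule

variable {R : Type u} [CommRing R]

/-- Uniform stabilization of a doubly descending array of submodules of an Artinian module. -/
lemma double_stab {A : Type u} [AddCommGroup A] [Module R A] [IsArtinian R A]
    (X : ℕ → ℕ → Submodule R A)
    (hi : ∀ j {i i'}, i ≤ i' → X i' j ≤ X i j)
    (hj : ∀ i {j j'}, j ≤ j' → X i j' ≤ X i j) :
    ∃ i₀, ∀ i, i₀ ≤ i → ∀ j, X i j = X i₀ j := by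
  obtain ⟨J, hJ⟩ := IsArtinian.monotone_stabilizes
    (⟨fun j => OrderDual.toDual (⨅ i, X i j), fun {j j'} h =>
      le_iInf fun i => iInf_le_of_le i (hj i h)⟩ : ℕ →o (Submodule R A)ᵒᵈ)
  have hcol : ∀ j, ∃ c, ∀ i, c ≤ i → X i j = X c j := by
    intro j
    obtain ⟨c, hc⟩ := IsArtinian.monotone_stabilizes
      (⟨fun i => OrderDual.toDual (X i j), fun {i i'} h => hi j h⟩ : ℕ →o (Submodule R A)ᵒᵈ)
    exact ⟨c, fun i hci => ((hc i hci).symm : X i j = X c j)⟩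
  choose c hc using hcol
  set i₀ := (Finset.range (J + 1)).sup c with hi₀def
  have hci₀ : ∀ j, j ≤ J → c j ≤ i₀ := fun j hja =>
    Finset.le_sup (Finset.mem_range.mpr (by omega))
  refine ⟨i₀, fun i hii₀ j => ?_⟩
  by_cases hjJ : j ≤ J
  · rw [hc j i (le_trans (hci₀ j hjJ) hii₀), hc j i₀ (hci₀ j hjJ)]
  · push_neg at hjJ
    have hJj : (J : ℕ) ≤ j := le_of_lt hjJ
    have hinfeq : (⨅ k, X k J) = ⨅ k, X k j := congrArg OrderDual.ofDual (hJ j hJj)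
    have hreach : X (c J) J = ⨅ k, X k J := by
      refine le_antisymm (le_iInf fun k => ?_) (iInf_le _ (c J))
      rcases le_or_gt (c J) k with h | h
      · exact le_of_eq (hc J k h).symm
      · exact hi J (le_of_lt h)
    have claim : ∀ i', i₀ ≤ i' → X i' j = ⨅ k, X k j := by
      intro i' hi'
      refine le_antisymm ?_ (iInf_le _ i')
      calc X i' j ≤ X i' J := hj i' hJj
        _ = X (c J) J := hc J i' (le_trans (hci₀ J le_rfl) hi')
        _ = ⨅ k, X k J := hreach
        _ = ⨅ k, X k j := hinfeq
    rw [claim i hii₀, claim i₀ le_rfl]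

/-- Melkersson's criterion, principal case. -/
lemma melkersson_principal {M : Type u} [AddCommGroup M] [Module R M] (a : R)
    (htor : ∀ x : M, ∃ n : ℕ, a ^ n • x = 0)
    (hart : IsArtinian R (torsionBy R M a)) : IsArtinian R M := by
  rw [← monotone_stabilizes_iff_artinian]
  intro f
  set N : ℕ → Submodule R M := fun i => OrderDual.ofDual (f i) with hNdef
  have hNmono : ∀ {i i'}, i ≤ i' → N i' ≤ N i := fun h => f.monotone h
  set A : Submodule R M := torsionBy R M a with hA
  set φ : ℕ → M →ₗ[R] M := fun j => a ^ j • LinearMap.id with hφ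
  set X : ℕ → ℕ → Submodule R ↥A := fun i j => comap A.subtype (map (φ j) (N i)) with hX
  have hXi : ∀ j {i i'}, i ≤ i' → X i' j ≤ X i j := by
    intro j i i' h
    exact comap_mono (map_mono (hNmono h))
  have hXj : ∀ i {j j'}, j ≤ j' → X i j' ≤ X i j := by
    intro i j j' h z hz
    rw [hX, mem_comap, mem_map] at hz ⊢
    obtain ⟨y, hy, hyz⟩ := hz
    refine ⟨a ^ (j' - j) • y, smul_mem _ _ hy, ?_⟩
    simp only [hφ, LinearMap.smul_apply, LinearMap.id_coe, id_eq] at hyz ⊢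
    rw [smul_smul, ← pow_add]
    rwa [show j + (j' - j) = j' by omega]
  obtain ⟨i₀, hi₀⟩ := double_stab X hXi hXj
  refine ⟨i₀, fun m hm => ?_⟩
  have hsub : N i₀ ≤ N m := by
    intro x hx
    obtain ⟨n, hn⟩ := htor x
    clear_value N
    induction n generalizing x with
    | zero => rw [pow_zero, one_smul] at hn; rw [hn]; exact zero_mem _
    | succ n ih =>
      have hmemA : a ^ n • x ∈ A := by
        rw [hA, mem_torsionBy_iff, smul_smul, ← pow_succ']
        exact hn
      have hz : (⟨a ^ n • x, hmemA⟩ : ↥A) ∈ X i₀ n := by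
        rw [hX, mem_comap, mem_map]
        exact ⟨x, hx, by simp [hφ]⟩
      rw [← hi₀ m hm n] at hz
      rw [hX, mem_comap, mem_map] at hz
      obtain ⟨y, hy, hyx⟩ := hz
      simp only [hφ, LinearMap.smul_apply, LinearMap.id_coe, id_eq, coe_subtype] at hyx
      have hxy : x - y ∈ N i₀ := sub_mem hx (hNmono hm hy)
      have hxy0 : a ^ n • (x - y) = 0 := by rw [smul_sub, hyx, sub_self]
      have := ih (x := x - y) hxy hxy0
      have : x - y + y ∈ N m := add_mem this hy
      rwa [sub_add_cancel] at this
  have : N m ≤ N i₀ := hNmono hm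
  exact congrArg OrderDual.toDual (le_antisymm this hsub)

/-- Melkersson's criterion for a finite list of elements. -/
lemma melkersson_list : ∀ (l : List R) (M : Type u) [AddCommGroup M] [Module R M],
    (∀ x : M, ∃ n : ℕ, ∀ a ∈ l, a ^ n • x = 0) →
    IsArtinian R ↥(torsionBySet R M {a | a ∈ l}) → IsArtinian R M := by
  intro l
  induction l with
  | nil =>
    intro M _ _ _ hart
    have h : torsionBySet R M {a | a ∈ ([] : List R)} = ⊤ := by
      rw [show {a | a ∈ ([] : List R)} = (∅ : Set R) by simp]
      simp [Submodule.torsionBySet, sInf_eq_iInf]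
    rw [h] at hart
    exact isArtinian_of_linearEquiv (Submodule.topEquiv)
  | cons a t ih =>
    intro M _ _ htor hart
    set V : Submodule R M := torsionBy R M a with hV
    have hVart : IsArtinian R ↥V := by
      refine ih ↥V (fun x => ?_) ?_
      · obtain ⟨n, hn⟩ := htor (x : M)
        exact ⟨n, fun b hb => Subtype.ext (by
          rw [Submodule.coe_smul]
          simpa using hn b (List.mem_cons_of_mem a hb))⟩
      · have hle : torsionBySet R M {b | b ∈ a :: t} ≤ V := by
          intro z hz
          rw [mem_torsionBySet_iff] at hz
          exact (mem_torsionBy_iff a z).mpr (hz ⟨a, by simp⟩)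
        have heq : torsionBySet R ↥V {b | b ∈ t} = comap V.subtype
            (torsionBySet R M {b | b ∈ a :: t}) := by
          ext z
          rw [mem_torsionBySet_iff, mem_comap, mem_torsionBySet_iff]
          constructor
          · rintro h ⟨b, hb⟩
            rcases List.mem_cons.mp hb with rfl | hb'
            · exact z.2
            · have := h ⟨b, hb'⟩
              rw [Subtype.ext_iff, Submodule.coe_smul] at this
              simpa using this
          · rintro h ⟨b, hb⟩
            exact Subtype.ext (by
              rw [Submodule.coe_smul]
              simpa using h ⟨b, List.mem_cons_of_mem a hb⟩)
        rw [heq]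
        exact isArtinian_of_linearEquiv (Submodule.comapSubtypeEquivOfLe hle).symm
    exact melkersson_principal a
      (fun x => (htor x).imp fun n hn => hn a List.mem_cons_self) hVart

/-- Every element of a module with an essential submodule `S` is annihilated by a power
of the annihilator of `S`, when `R` is Noetherian. -/
lemma torsion_of_essential [IsNoetherianRing R] {E : Type u} [AddCommGroup E] [Module R E]
    (S : Submodule R E) (hess : ∀ P : Submodule R E, P ≠ ⊥ → S ⊓ P ≠ ⊥)
    (x : E) : ∃ n : ℕ, ∀ r ∈ S.annihilator ^ n, r • x = 0 := by
  set J : Ideal R := S.annihilator with hJ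
  set N : Submodule R E := span R {x} with hN
  have hNfg : N.FG := fg_span_singleton x
  have : IsNoetherian R ↥N := isNoetherian_of_fg_of_noetherian N hNfg
  -- the increasing chain of J^n-torsion inside N
  set K : ℕ → Submodule R ↥N := fun n => comap N.subtype (torsionBySet R E ((J ^ n : Ideal R) : Set R)) with hK
  have hKmono : ∀ {n n'}, n ≤ n' → K n ≤ K n' := by
    intro n n' h z hz
    rw [hK, mem_comap, mem_torsionBySet_iff] at hz ⊢
    rintro ⟨r, hr⟩
    exact hz ⟨r, Ideal.pow_le_pow_right h hr⟩
  obtain ⟨k, hk⟩ := (monotone_stabilizes_iff_noetherian.mpr this)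
    ⟨K, fun {n n'} h => hKmono h⟩
  -- it suffices to show K k = ⊤
  suffices htop : K k = ⊤ by
    refine ⟨k, fun r hr => ?_⟩
    have hx : (⟨x, subset_span rfl⟩ : ↥N) ∈ K k := htop ▸ mem_top
    rw [hK, mem_comap, mem_torsionBySet_iff] at hx
    simpa using hx ⟨r, hr⟩
  by_contra hne
  have hlt : K k < ⊤ := lt_of_le_of_ne le_top hne
  have : Nontrivial (↥N ⧸ K k) := Submodule.Quotient.nontrivial_iff.mpr hne
  obtain ⟨p, hp⟩ := associatedPrimes.nonempty R (↥N ⧸ K k)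
  obtain ⟨hprime, y', hy'⟩ := isAssociatedPrime_iff.mp hp
  obtain ⟨y, rfl⟩ := Submodule.Quotient.mk_surjective _ y'
  -- membership in p
  have hpmem : ∀ r : R, r ∈ p ↔ r • Submodule.Quotient.mk (p := K k) y = 0 := by
    intro r
    rw [hy', mem_colon_singleton, Submodule.mem_bot]
  have hymem : ∀ r : R, r • Submodule.Quotient.mk (p := K k) y = 0 ↔ r • y ∈ K k := by
    intro r
    rw [← Submodule.Quotient.mk_smul, Submodule.Quotient.mk_eq_zero]
  -- step (a'): ¬ J ≤ p
  have hJp : ¬ J ≤ p := by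
    intro hle
    have hyK : y ∈ K (k + 1) := by
      have hgoal : ∀ r ∈ J ^ (k + 1), r • (y : E) = 0 := by
        intro r hr
        rw [pow_succ] at hr
        refine Submodule.smul_induction_on hr ?_ ?_
        · intro s hs b hb
          have h1 : b • y ∈ K k := (hymem b).mp ((hpmem b).mp (hle hb))
          rw [hK, mem_comap, mem_torsionBySet_iff] at h1
          have h2 := h1 ⟨s, hs⟩
          simp only [coe_subtype, Submodule.coe_smul] at h2
          rw [smul_eq_mul, mul_smul]
          exact h2
        · intro c d hc hd
          rw [add_smul, hc, hd, add_zero]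
      rw [hK, mem_comap, mem_torsionBySet_iff]
      rintro ⟨r, hr⟩
      simpa using hgoal r hr
    have hkk : K k = K (k + 1) := hk (k + 1) (Nat.le_succ k)
    rw [← hkk] at hyK
    have hmk0 : Submodule.Quotient.mk (p := K k) y = 0 := (Submodule.Quotient.mk_eq_zero _).mpr hyK
    rw [hmk0] at hy'
    replace hy' : p = ⊤ := by
      rw [hy', Ideal.eq_top_iff_one, mem_colon_singleton, smul_zero]; exact zero_mem _
    exact hprime.ne_top hy'
  -- step (a): get a ∈ J^k \ p
  have hJkp : ¬ J ^ k ≤ p := fun h => hJp (hprime.le_of_pow_le h)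
  obtain ⟨a, haJ, hap⟩ := SetLike.not_le_iff_exists.mp hJkp
  -- w := a • y
  set w : E := a • (y : E) with hw
  have hwmem : ∀ r : R, r • w = 0 ↔ r ∈ p := by
    intro r
    constructor
    · intro h
      have : (r * a) • (y : E) = 0 := by rw [mul_smul]; exact h
      have h2 : (r * a) • y = 0 := Subtype.ext (by rw [Submodule.coe_smul]; exact this)
      have h3 : (r * a) • Submodule.Quotient.mk (p := K k) y = 0 := by
        rw [← Submodule.Quotient.mk_smul, h2, Submodule.Quotient.mk_zero]
      rcases hprime.mem_or_mem ((hpmem _).mpr h3) with h4 | h4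
      · exact h4
      · exact absurd h4 hap
    · intro h
      have h1 : r • y ∈ K k := (hymem r).mp ((hpmem r).mp h)
      rw [hK, mem_comap, mem_torsionBySet_iff] at h1
      have h2 := h1 ⟨a, haJ⟩
      simp only [coe_subtype, Submodule.coe_smul] at h2
      calc r • w = a • (r • (y : E)) := by rw [hw, smul_comm]
        _ = 0 := h2
  have hwne : w ≠ 0 := by
    intro h0
    have : (1 : R) • w = 0 := by rw [one_smul]; exact h0
    have := (hwmem 1).mp this
    exact hprime.ne_top (Ideal.eq_top_of_isUnit_mem _ this isUnit_one)
  -- essentiality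
  have hP : span R {w} ≠ ⊥ := by
    rw [Ne, span_singleton_eq_bot]
    exact hwne
  obtain ⟨z, hz, hzne⟩ := Submodule.exists_mem_ne_zero_of_ne_bot (hess _ hP)
  obtain ⟨hzS, hzP⟩ := hz
  obtain ⟨r, rfl⟩ := mem_span_singleton.mp hzP
  have hrp : r ∉ p := fun h => hzne ((hwmem r).mpr h)
  have hfinal : J ≤ p := by
    intro b hb
    have : b • (r • w) = 0 := by
      rw [hJ, mem_annihilator] at hb
      exact hb _ hzS
    have : (b * r) • w = 0 := by rw [mul_smul]; exact this
    rcases hprime.mem_or_mem ((hwmem _).mp this) with h | h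
    · exact h
    · exact absurd h hrp
  exact hJp hfinal

lemma pi_isSemisimpleModule {ι : Type u} [Finite ι] {Mi : ι → Type u}
    [∀ i, AddCommGroup (Mi i)] [∀ i, Module R (Mi i)] [∀ i, IsSemisimpleModule R (Mi i)] :
    IsSemisimpleModule R (∀ i, Mi i) := by
  classical
  exact isSemisimpleModule_of_isSemisimpleModule_submodule'
    (p := fun i => LinearMap.range (LinearMap.single R Mi i))
    (fun i => IsSemisimpleModule.range _)
    (by simp_rw [LinearMap.range_eq_map, Submodule.iSup_map_single, Submodule.pi_top])

/-- If `S` is a finitely generated semisimple essential submodule of `E`, then the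
`Ann(S)`-torsion of `E` is contained in `S`. -/
lemma torsionBySet_annihilator_le_of_essential {E : Type u} [AddCommGroup E] [Module R E]
    (S : Submodule R E) (hss : IsSemisimpleModule R ↥S) (hfg : S.FG)
    (hess : ∀ P : Submodule R E, P ≠ ⊥ → S ⊓ P ≠ ⊥) :
    torsionBySet R E ((S.annihilator : Ideal R) : Set R) ≤ S := by
  classical
  set J : Ideal R := S.annihilator with hJ
  -- (i) R ⧸ J is semisimple as an R-module
  obtain ⟨T, hT⟩ := hfg
  have hTS : ∀ t : {z : E // z ∈ T}, (t : E) ∈ S := fun t => hT ▸ subset_span t.2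
  set g : R →ₗ[R] ({z : E // z ∈ T} → ↥S) :=
    LinearMap.pi (fun t => LinearMap.toSpanSingleton R ↥S ⟨(t : E), hTS t⟩) with hg
  have hker : LinearMap.ker g = J := by
    have hann : (span R ((↑T : Set E))).annihilator = J := by rw [hT]
    ext r
    rw [LinearMap.mem_ker, ← hann, mem_annihilator_span, funext_iff]
    constructor
    · intro h n
      have h2 := h ⟨(n : E), by simpa using n.2⟩
      rw [Subtype.ext_iff] at h2
      simpa [hg, LinearMap.toSpanSingleton] using h2
    · intro h t
      refine Subtype.ext ?_
      have h2 := h ⟨(t : E), by simpa using t.2⟩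
      simpa [hg, LinearMap.toSpanSingleton] using h2
  haveI hpiss : IsSemisimpleModule R ({z : E // z ∈ T} → ↥S) := pi_isSemisimpleModule
  have hquot : IsSemisimpleModule R (R ⧸ J) := by
    have e := LinearMap.quotKerEquivRange g
    rw [hker] at e
    exact .congr e
  -- (ii) R ⧸ J is a semisimple ring
  have hring : IsSemisimpleRing (R ⧸ J) := by
    have hsmul : ∀ (r : R) (x : R ⧸ J), r • x = (Ideal.Quotient.mk J) r • x := by
      intro r x
      obtain ⟨s, rfl⟩ := Submodule.Quotient.mk_surjective _ x
      rfl
    let l : (R ⧸ J) →ₛₗ[Ideal.Quotient.mk J] (R ⧸ J) :=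
      { AddMonoidHom.id (R ⧸ J) with map_smul' := fun r x => hsmul r x }
    exact (l.isSemisimpleModule_iff_of_bijective Function.bijective_id).mp hquot
  -- (iii) V := torsion by J is a semisimple R-module
  set V : Submodule R E := torsionBySet R E ((J : Ideal R) : Set R) with hV
  have hVss : IsSemisimpleModule R ↥V := by
    let l2 : ↥V →ₛₗ[Ideal.Quotient.mk J] ↥(torsionBySet R E J) :=
      { AddMonoidHom.id ↥V with map_smul' := fun r x => rfl }
    exact (l2.isSemisimpleModule_iff_of_bijective Function.bijective_id).mpr inferInstance
  -- (iv) complement argument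
  have hSV : S ≤ V := by
    intro z hz
    rw [hV, mem_torsionBySet_iff]
    rintro ⟨r, hr⟩
    exact (mem_annihilator.mp hr) z hz
  set S' : Submodule R ↥V := comap V.subtype S with hS'
  obtain ⟨C', hC'⟩ := exists_isCompl S'
  set C : Submodule R E := map V.subtype C' with hC
  have hSC : S ⊓ C = ⊥ := by
    rw [eq_bot_iff]
    intro z hz
    obtain ⟨hzS, hzC⟩ := Submodule.mem_inf.mp hz
    obtain ⟨c', hc', rfl⟩ := Submodule.mem_map.mp (hC ▸ hzC)
    have : c' ∈ S' ⊓ C' := Submodule.mem_inf.mpr ⟨Submodule.mem_comap.mpr hzS, hc'⟩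
    rw [hC'.inf_eq_bot] at this
    rw [this]
    simp
  have hCbot : C = ⊥ := by
    by_contra hne
    exact hess C hne hSC
  have hC'bot : C' = ⊥ := by
    apply Submodule.map_injective_of_injective V.injective_subtype
    rw [← hC, hCbot, Submodule.map_bot]
  have hS'top : S' = ⊤ := by
    have := hC'.sup_eq_top
    rwa [hC'bot, sup_bot_eq] at this
  intro z hz
  have : (⟨z, hz⟩ : ↥V) ∈ S' := hS'top ▸ mem_top
  rwa [hS', mem_comap] at this

end Auxiliary

theorem finitelyEmbedded_isArtinian (R : Type u) [CommRing R] [IsNoetherianRing R]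
    (M : Type u) [AddCommGroup M] [Module R M] (h : FinitelyEmbedded R M) :
    IsArtinian R M := by
  obtain ⟨E, _hinj, S, hss, hfg, hess, f, hf⟩ := h
  suffices hart : IsArtinian R E by exact isArtinian_of_injective f hf
  set J : Ideal R := S.annihilator with hJ
  obtain ⟨s, hs⟩ := IsNoetherian.noetherian (J : Ideal R)
  refine melkersson_list s.toList E ?_ ?_
  · intro x
    obtain ⟨n, hn⟩ := torsion_of_essential S hess x
    refine ⟨n, fun a ha => hn _ ?_⟩
    have haJ : a ∈ J := by
      rw [← hs]
      exact Ideal.subset_span (by simpa using ha)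
    exact Ideal.pow_mem_pow haJ n
  · have hset : {a : R | a ∈ s.toList} = (↑s : Set R) := by ext a; simp
    rw [hset]
    have heq : Submodule.torsionBySet R E (↑s : Set R)
        = Submodule.torsionBySet R E ((J : Ideal R) : Set R) := by
      rw [Submodule.torsionBySet_eq_torsionBySet_span,
        show Ideal.span (↑s : Set R) = J from hs]
    rw [heq]
    have hVle := torsionBySet_annihilator_le_of_essential S hss hfg hess
    haveI : IsSemisimpleModule R ↥S := hss
    haveI : Module.Finite R ↥S := Module.Finite.iff_fg.mpr hfg
    exact isArtinian_of_linearEquiv (Submodule.comapSubtypeEquivOfLe hVle)
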